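/- arXiv:1204.5399 — 4 statements merged into one kernel-verified Lean document; each statement's English description precedes it below -/
import Mathlib

section
/- Let U and V be n×n row-stochastic matrices (all entries nonnegative and every row sums to 1), and for a row-stochastic matrix M define δ(M) = (1/2) · max over pairs of rows i, j of Σ_k |M_{i,k} − M_{j,k}|. Then δ(U·V) ≤ δ(U) · δ(V). -/
open Finset

/-- A real matrix is row-stochastic if all entries are nonnegative and every row sums to 1. -/
def RowStochastic {n m : ℕ} (M : Matrix (Fin n) (Fin m) ℝ) : Prop :=
  (∀ i j, 0 ≤ M i j) ∧ ∀ i, ∑ j, M i j = 1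

/-- δ(M) = (1/2) · max over pairs of rows i, j of Σ_k |M_{i,k} − M_{j,k}|. -/
noncomputable def delta {n m : ℕ} [NeZero n] (M : Matrix (Fin n) (Fin m) ℝ) : ℝ :=
  (1 / 2) *
    Finset.univ.sup' Finset.univ_nonempty
      (fun p : Fin n × Fin n => ∑ k, |M p.1 k - M p.2 k|)

lemma delta_nonneg {n m : ℕ} [NeZero n] (M : Matrix (Fin n) (Fin m) ℝ) : 0 ≤ delta M := by
  have h0 : (fun p : Fin n × Fin n => ∑ k, |M p.1 k - M p.2 k|) ((0 : Fin n), (0 : Fin n)) ≤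
      Finset.univ.sup' Finset.univ_nonempty
        (fun p : Fin n × Fin n => ∑ k, |M p.1 k - M p.2 k|) :=
    Finset.le_sup' (fun p : Fin n × Fin n => ∑ k, |M p.1 k - M p.2 k|)
      (Finset.mem_univ ((0 : Fin n), (0 : Fin n)))
  simp only [sub_self, abs_zero, Finset.sum_const_zero] at h0
  unfold delta
  nlinarith

lemma row_dist_le {n m : ℕ} [NeZero n] (M : Matrix (Fin n) (Fin m) ℝ) (i j : Fin n) :
    ∑ k, |M i k - M j k| ≤ 2 * delta M := by
  have h0 : (fun p : Fin n × Fin n => ∑ k, |M p.1 k - M p.2 k|) (i, j) ≤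
      Finset.univ.sup' Finset.univ_nonempty
        (fun p : Fin n × Fin n => ∑ k, |M p.1 k - M p.2 k|) :=
    Finset.le_sup' (fun p : Fin n × Fin n => ∑ k, |M p.1 k - M p.2 k|)
      (Finset.mem_univ (i, j))
  unfold delta
  simp only at h0
  linarith

theorem delta_mul_le {n : ℕ} [NeZero n] (U V : Matrix (Fin n) (Fin n) ℝ)
    (hU : RowStochastic U) (hV : RowStochastic V) :
    delta (U * V) ≤ delta U * delta V := by
  have hU0 := delta_nonneg U
  have hV0 := delta_nonneg V
  have key : ∀ i j : Fin n, ∑ k, |(U * V) i k - (U * V) j k| ≤ 2 * (delta U * delta V) := by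
    intro i j
    set a : Fin n → ℝ := fun s => U i s - U j s with ha
    set p : Fin n → ℝ := fun s => max (a s) 0 with hp
    set q : Fin n → ℝ := fun s => max (-a s) 0 with hq
    have hp0 : ∀ s, 0 ≤ p s := fun s => le_max_right _ _
    have hq0 : ∀ s, 0 ≤ q s := fun s => le_max_right _ _
    have hpq : ∀ s, a s = p s - q s := by
      intro s; simp only [hp, hq]
      rcases le_total (a s) 0 with h | h
      · rw [max_eq_right h, max_eq_left (by linarith)]; ring
      · rw [max_eq_left h, max_eq_right (by linarith)]; ring
    have habs : ∀ s, |a s| = p s + q s := by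
      intro s; simp only [hp, hq]
      rcases le_total (a s) 0 with h | h
      · rw [max_eq_right h, max_eq_left (by linarith), abs_of_nonpos h]; ring
      · rw [max_eq_left h, max_eq_right (by linarith), abs_of_nonneg h]; ring
    have hsum0 : ∑ s, a s = 0 := by
      simp only [ha, Finset.sum_sub_distrib, hU.2 i, hU.2 j, sub_self]
    set c : ℝ := ∑ s, p s with hc
    have hcq : ∑ s, q s = c := by
      have : ∑ s, (p s - q s) = 0 := by
        calc ∑ s, (p s - q s) = ∑ s, a s := Finset.sum_congr rfl fun s _ => (hpq s).symm
          _ = 0 := hsum0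
      rw [Finset.sum_sub_distrib] at this
      linarith
    have hc0 : 0 ≤ c := Finset.sum_nonneg fun s _ => hp0 s
    have hcU : c ≤ delta U := by
      have h1 : ∑ s, |a s| = 2 * c := by
        rw [Finset.sum_congr rfl fun s _ => habs s, Finset.sum_add_distrib, hcq]; ring
      have h2 := row_dist_le U i j
      change ∑ k, |a k| ≤ 2 * delta U at h2
      linarith [h1 ▸ h2]
    have hdiff : ∀ k, (U * V) i k - (U * V) j k = ∑ s, a s * V s k := by
      intro k
      simp only [Matrix.mul_apply, ← Finset.sum_sub_distrib, ha, sub_mul]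
    by_cases hcz : c = 0
    · have hpz : ∀ s, p s = 0 := by
        intro s
        have := (Finset.sum_eq_zero_iff_of_nonneg (fun s _ => hp0 s)).mp (hc.symm.trans hcz)
        exact this s (Finset.mem_univ s)
      have hqz : ∀ s, q s = 0 := by
        intro s
        have := (Finset.sum_eq_zero_iff_of_nonneg (fun s _ => hq0 s)).mp (hcq.trans hcz)
        exact this s (Finset.mem_univ s)
      have haz : ∀ s, a s = 0 := fun s => by rw [hpq s, hpz s, hqz s]; ring
      have : ∀ k, (U * V) i k - (U * V) j k = 0 := by
        intro k; rw [hdiff k]; exact Finset.sum_eq_zero fun s _ => by rw [haz s, zero_mul]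
      simp only [this, abs_zero, Finset.sum_const_zero]
      nlinarith
    · have hcpos : 0 < c := lt_of_le_of_ne hc0 (Ne.symm hcz)
      have hkey : ∀ k, c * ((U * V) i k - (U * V) j k) =
          ∑ s, ∑ t, p s * q t * (V s k - V t k) := by
        intro k
        have e1 : ∑ s, ∑ t, p s * q t * (V s k - V t k) =
            (∑ s, p s * V s k) * (∑ t, q t) - (∑ s, p s) * (∑ t, q t * V t k) := by
          rw [Finset.sum_mul_sum, Finset.sum_mul_sum, ← Finset.sum_sub_distrib]
          refine Finset.sum_congr rfl fun s _ => ?_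
          rw [← Finset.sum_sub_distrib]
          refine Finset.sum_congr rfl fun t _ => ?_
          ring
        rw [e1, hcq, ← hc, hdiff k, Finset.mul_sum]
        calc ∑ s, c * (a s * V s k)
            = ∑ s, (p s * V s k * c - c * (q s * V s k)) :=
              Finset.sum_congr rfl fun s _ => by rw [hpq s]; ring
          _ = (∑ s, p s * V s k) * c - c * ∑ s, q s * V s k := by
              rw [Finset.sum_sub_distrib, ← Finset.sum_mul, ← Finset.mul_sum]
      calc ∑ k, |(U * V) i k - (U * V) j k|
          = c⁻¹ * ∑ k, |c * ((U * V) i k - (U * V) j k)| := by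
            rw [Finset.mul_sum]
            refine Finset.sum_congr rfl fun k _ => ?_
            rw [abs_mul, abs_of_pos hcpos, ← mul_assoc, inv_mul_cancel₀ hcz, one_mul]
        _ ≤ c⁻¹ * ∑ k, ∑ s, ∑ t, p s * q t * |V s k - V t k| := by
            refine mul_le_mul_of_nonneg_left (Finset.sum_le_sum fun k _ => ?_)
              (inv_nonneg.mpr hc0)
            rw [hkey k]
            refine (Finset.abs_sum_le_sum_abs _ _).trans (Finset.sum_le_sum fun s _ => ?_)
            refine (Finset.abs_sum_le_sum_abs _ _).trans (Finset.sum_le_sum fun t _ => ?_)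
            rw [abs_mul, abs_mul, abs_of_nonneg (hp0 s), abs_of_nonneg (hq0 t)]
        _ = c⁻¹ * ∑ s, ∑ t, p s * q t * ∑ k, |V s k - V t k| := by
            congr 1
            rw [Finset.sum_comm]
            refine Finset.sum_congr rfl fun s _ => ?_
            rw [Finset.sum_comm]
            refine Finset.sum_congr rfl fun t _ => ?_
            rw [Finset.mul_sum]
        _ ≤ c⁻¹ * ∑ s, ∑ t, p s * q t * (2 * delta V) := by
            refine mul_le_mul_of_nonneg_left (Finset.sum_le_sum fun s _ =>
              Finset.sum_le_sum fun t _ => ?_) (inv_nonneg.mpr hc0)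
            exact mul_le_mul_of_nonneg_left (row_dist_le V s t)
              (mul_nonneg (hp0 s) (hq0 t))
        _ = c⁻¹ * (c * c * (2 * delta V)) := by
            congr 1
            calc ∑ s, ∑ t, p s * q t * (2 * delta V)
                = (∑ s, ∑ t, p s * q t) * (2 * delta V) := by
                  rw [Finset.sum_mul]
                  exact Finset.sum_congr rfl fun s _ => (Finset.sum_mul _ _ _).symm
              _ = c * c * (2 * delta V) := by
                  rw [← Finset.sum_mul_sum, hcq, ← hc]
        _ = c * (2 * delta V) := by field_simp
        _ ≤ delta U * (2 * delta V) := by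
            exact mul_le_mul_of_nonneg_right hcU (by positivity)
        _ = 2 * (delta U * delta V) := by ring
  calc delta (U * V)
      = (1 / 2) * Finset.univ.sup' Finset.univ_nonempty
          (fun p : Fin n × Fin n => ∑ k, |(U * V) p.1 k - (U * V) p.2 k|) := rfl
    _ ≤ (1 / 2) * (2 * (delta U * delta V)) :=
        mul_le_mul_of_nonneg_left (Finset.sup'_le _ _ fun ij _ => key ij.1 ij.2) (by norm_num)
    _ = delta U * delta V := by ring
end

section
/- Let P be an n×n row-stochastic matrix and F an n×z row-stochastic matrix. Then δ(P·F) ≤ (1 − γ(P)) · δ(F), where δ(M) = (1/2) · max_{i,j} Σ_k |M_{i,k} − M_{j,k}| and γ(P) = min_{i,j} Σ_k min(P_{i,k}, P_{j,k}). In particular δ(P·F) ≤ δ(F). -/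
open Finset

/-- γ(M) = min over pairs of rows i, j of Σ_k min(M_{i,k}, M_{j,k}). -/
noncomputable def gamma {n m : ℕ} [NeZero n] (M : Matrix (Fin n) (Fin m) ℝ) : ℝ :=
  Finset.univ.inf' Finset.univ_nonempty
    (fun p : Fin n × Fin n => ∑ k, min (M p.1 k) (M p.2 k))

theorem delta_mul_le_one_sub_gamma_mul {n z : ℕ} [NeZero n]
    (P : Matrix (Fin n) (Fin n) ℝ) (F : Matrix (Fin n) (Fin z) ℝ)
    (hP : RowStochastic P) (hF : RowStochastic F) :
    delta (P * F) ≤ (1 - gamma P) * delta F ∧ delta (P * F) ≤ delta F := by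
  obtain ⟨hPnn, hPsum⟩ := hP
  obtain ⟨hFnn, hFsum⟩ := hF
  obtain ⟨i0⟩ := (inferInstance : Nonempty (Fin n))
  set D : ℝ := Finset.univ.sup' Finset.univ_nonempty
      (fun p : Fin n × Fin n => ∑ k, |F p.1 k - F p.2 k|) with hDdef
  have hdeltaF : delta F = (1 / 2) * D := rfl
  have hD0 : 0 ≤ D := by
    have h := Finset.le_sup' (fun p : Fin n × Fin n => ∑ k, |F p.1 k - F p.2 k|)
      (Finset.mem_univ (i0, i0))
    exact le_trans (by simp) h
  have hDpair : ∀ k l : Fin n, ∑ s, |F k s - F l s| ≤ D := fun k l =>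
    Finset.le_sup' (fun p : Fin n × Fin n => ∑ k, |F p.1 k - F p.2 k|)
      (Finset.mem_univ (k, l))
  have hgamma0 : 0 ≤ gamma P := by
    apply Finset.le_inf'
    intro p _
    exact Finset.sum_nonneg fun k _ => le_min (hPnn p.1 k) (hPnn p.2 k)
  -- key per-pair bound
  have key : ∀ i j : Fin n, ∑ s, |(P * F) i s - (P * F) j s| ≤ (1 - gamma P) * D := by
    intro i j
    set a : Fin n → ℝ := fun k => P i k - P j k with ha
    set p : Fin n → ℝ := fun k => max (a k) 0 with hp
    set m : Fin n → ℝ := fun k => max (-(a k)) 0 with hm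
    have hp0 : ∀ k, 0 ≤ p k := fun k => le_max_right _ _
    have hm0 : ∀ k, 0 ≤ m k := fun k => le_max_right _ _
    have hpm : ∀ k, a k = p k - m k := by
      intro k
      rcases le_total (a k) 0 with h | h
      · simp [hp, hm, max_eq_right h, max_eq_left (neg_nonneg.mpr h)]
      · simp [hp, hm, max_eq_left h, max_eq_right (neg_nonpos.mpr h)]
    have hmin : ∀ k, min (P i k) (P j k) = P i k - p k := by
      intro k
      rcases le_total (P i k) (P j k) with h | h
      · have : a k ≤ 0 := sub_nonpos.mpr h
        simp [hp, min_eq_left h, max_eq_right this]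
      · have h0 : 0 ≤ a k := sub_nonneg.mpr h
        simp [hp, ha, min_eq_right h, max_eq_left h0]
        rw [max_eq_left (sub_nonneg.mpr h)]; ring
    set A : ℝ := ∑ k, p k with hA
    have hsuma : ∑ k, a k = 0 := by
      simp [ha, Finset.sum_sub_distrib, hPsum i, hPsum j]
    have hsumm : ∑ k, m k = A := by
      have : ∑ k, a k = ∑ k, p k - ∑ k, m k := by
        rw [← Finset.sum_sub_distrib]
        exact Finset.sum_congr rfl fun k _ => hpm k
      rw [hsuma] at this
      linarith
    have hAle : A ≤ 1 - gamma P := by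
      have h1 : ∑ k, min (P i k) (P j k) = 1 - A := by
        have : ∑ k, min (P i k) (P j k) = ∑ k, (P i k - p k) :=
          Finset.sum_congr rfl fun k _ => hmin k
        rw [this, Finset.sum_sub_distrib, hPsum i]
      have h2 : gamma P ≤ ∑ k, min (P i k) (P j k) :=
        Finset.inf'_le (fun q : Fin n × Fin n => ∑ k, min (P q.1 k) (P q.2 k))
          (Finset.mem_univ (i, j))
      linarith
    have hA0 : 0 ≤ A := Finset.sum_nonneg fun k _ => hp0 k
    have hPF : ∀ s, (P * F) i s - (P * F) j s = ∑ k, a k * F k s := by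
      intro s
      simp [Matrix.mul_apply, ha, ← Finset.sum_sub_distrib, sub_mul]
    rcases eq_or_lt_of_le hA0 with hAz | hApos
    · -- A = 0 : all a k = 0, difference is zero
      have hpz : ∀ k ∈ Finset.univ, p k = 0 :=
        (Finset.sum_eq_zero_iff_of_nonneg fun k _ => hp0 k).mp hAz.symm
      have hmz : ∀ k ∈ Finset.univ, m k = 0 :=
        (Finset.sum_eq_zero_iff_of_nonneg fun k _ => hm0 k).mp (by rw [hsumm]; exact hAz.symm)
      have haz : ∀ k, a k = 0 := fun k => by
        rw [hpm k, hpz k (Finset.mem_univ k), hmz k (Finset.mem_univ k), sub_zero]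
      have : ∑ s, |(P * F) i s - (P * F) j s| = 0 := by
        apply Finset.sum_eq_zero
        intro s _
        rw [hPF s, abs_eq_zero]
        exact Finset.sum_eq_zero fun k _ => by rw [haz k, zero_mul]
      rw [this]
      exact mul_nonneg (by linarith) hD0
    · -- A > 0
      have hmain : ∀ s, A * |(P * F) i s - (P * F) j s|
          ≤ ∑ k, ∑ l, p k * m l * |F k s - F l s| := by
        intro s
        have hid : A * ((P * F) i s - (P * F) j s)
            = ∑ k, ∑ l, p k * m l * (F k s - F l s) := by
          have e1 : ∀ k, ∑ l, p k * m l * (F k s - F l s)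
              = A * (p k * F k s) - p k * ∑ l, m l * F l s := by
            intro k
            rw [← hsumm, Finset.sum_mul, Finset.mul_sum, ← Finset.sum_sub_distrib]
            refine Finset.sum_congr rfl fun l _ => by ring
          rw [Finset.sum_congr rfl fun k _ => e1 k, Finset.sum_sub_distrib,
            ← Finset.mul_sum, ← Finset.sum_mul, ← hA, hPF s]
          have e2 : ∑ k, a k * F k s = ∑ k, p k * F k s - ∑ k, m k * F k s := by
            rw [← Finset.sum_sub_distrib]
            exact Finset.sum_congr rfl fun k _ => by rw [hpm k]; ring
          rw [e2]; ring
        calc A * |(P * F) i s - (P * F) j s| = |A * ((P * F) i s - (P * F) j s)| := by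
              rw [abs_mul, abs_of_nonneg hA0]
          _ = |∑ k, ∑ l, p k * m l * (F k s - F l s)| := by rw [hid]
          _ ≤ ∑ k, |∑ l, p k * m l * (F k s - F l s)| := Finset.abs_sum_le_sum_abs _ _
          _ ≤ ∑ k, ∑ l, |p k * m l * (F k s - F l s)| :=
              Finset.sum_le_sum fun k _ => Finset.abs_sum_le_sum_abs _ _
          _ = ∑ k, ∑ l, p k * m l * |F k s - F l s| := by
              refine Finset.sum_congr rfl fun k _ => Finset.sum_congr rfl fun l _ => ?_
              rw [abs_mul, abs_mul, abs_of_nonneg (hp0 k), abs_of_nonneg (hm0 l)]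
      have hsum : A * ∑ s, |(P * F) i s - (P * F) j s| ≤ A * (A * D) := by
        calc A * ∑ s, |(P * F) i s - (P * F) j s|
            = ∑ s, A * |(P * F) i s - (P * F) j s| := Finset.mul_sum _ _ _
          _ ≤ ∑ s, ∑ k, ∑ l, p k * m l * |F k s - F l s| :=
              Finset.sum_le_sum fun s _ => hmain s
          _ = ∑ k, ∑ l, p k * m l * ∑ s, |F k s - F l s| := by
              rw [Finset.sum_comm]
              refine Finset.sum_congr rfl fun k _ => ?_
              rw [Finset.sum_comm]
              refine Finset.sum_congr rfl fun l _ => ?_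
              rw [Finset.mul_sum]
          _ ≤ ∑ k, ∑ l, p k * m l * D := by
              refine Finset.sum_le_sum fun k _ => Finset.sum_le_sum fun l _ => ?_
              exact mul_le_mul_of_nonneg_left (hDpair k l) (mul_nonneg (hp0 k) (hm0 l))
          _ = A * (A * D) := by
              have e : ∀ k : Fin n, ∑ l, p k * m l * D = p k * (A * D) := by
                intro k
                rw [← hsumm, Finset.sum_mul, Finset.mul_sum]
                exact Finset.sum_congr rfl fun l _ => by ring
              rw [Finset.sum_congr rfl fun k _ => e k, ← Finset.sum_mul, ← hA]
      have hAD : ∑ s, |(P * F) i s - (P * F) j s| ≤ A * D :=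
        le_of_mul_le_mul_left (by linarith [hsum]) hApos
      calc ∑ s, |(P * F) i s - (P * F) j s| ≤ A * D := hAD
        _ ≤ (1 - gamma P) * D := mul_le_mul_of_nonneg_right hAle hD0
  have hmainbound : delta (P * F) ≤ (1 - gamma P) * delta F := by
    rw [hdeltaF, delta]
    have hsup : Finset.univ.sup' Finset.univ_nonempty
        (fun p : Fin n × Fin n => ∑ k, |(P * F) p.1 k - (P * F) p.2 k|)
        ≤ (1 - gamma P) * D := by
      apply Finset.sup'_le
      intro q _
      exact key q.1 q.2
    calc (1 / 2 : ℝ) * Finset.univ.sup' Finset.univ_nonempty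
          (fun p : Fin n × Fin n => ∑ k, |(P * F) p.1 k - (P * F) p.2 k|)
        ≤ (1 / 2) * ((1 - gamma P) * D) := by linarith [hsup]
      _ = (1 - gamma P) * ((1 / 2) * D) := by ring
  refine ⟨hmainbound, hmainbound.trans ?_⟩
  have hdF0 : 0 ≤ delta F := by rw [hdeltaF]; linarith
  nlinarith [hgamma0, hdF0]
end

section
/- Fix n ≥ 1 experts, z ≥ 2 outcomes, and ε > 0. Let f_1⁽⁰⁾, …, f_n⁽⁰⁾ ∈ ℝ^z be probability vectors, and for t ≥ 1 define p_{i,j}⁽ᵗ⁾ = (ε + D(f_i⁽ᵗ⁻¹⁾, f_j⁽ᵗ⁻¹⁾))⁻¹ / Σ_{k=1}^{n} (ε + D(f_i⁽ᵗ⁻¹⁾, f_k⁽ᵗ⁻¹⁾))⁻¹ and f_i⁽ᵗ⁾ = Σ_{j=1}^{n} p_{i,j}⁽ᵗ⁾ · f_j⁽ᵗ⁻¹⁾, where D(f, g) = sqrt( (Σ_{k=1}^{z} (f_k − g_k)²) / z ). Then a consensus is reached: there exists a probability vector f* ∈ ℝ^z such that for every expert i, the sequence f_i⁽ᵗ⁾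 converges to f* as t → ∞; in particular, for all experts i and j, f_i⁽ᵗ⁾ − f_j⁽ᵗ⁾ → 0 as t → ∞. -/
open Finset

/-- A probability vector: nonnegative entries summing to 1. -/
def ProbVec {z : ℕ} (f : Fin z → ℝ) : Prop :=
  (∀ k, 0 ≤ f k) ∧ ∑ k, f k = 1

/-- Root-mean-square deviation between two opinions. -/
noncomputable def D {z : ℕ} (f g : Fin z → ℝ) : ℝ :=
  Real.sqrt ((∑ k, (f k - g k) ^ 2) / z)

/-- The weight that expert `i` assigns to expert `j`, given current opinions `F`:
`p_{i,j} = (ε + D(F i, F j))⁻¹ / Σ_m (ε + D(F i, F m))⁻¹`. -/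
noncomputable def weight {n z : ℕ} (ε : ℝ) (F : Fin n → Fin z → ℝ) (i j : Fin n) : ℝ :=
  (ε + D (F i) (F j))⁻¹ / ∑ m, (ε + D (F i) (F m))⁻¹

/-- The opinions after `t` rounds of the consensual updating process. -/
noncomputable def opinions {n z : ℕ} (ε : ℝ) (F0 : Fin n → Fin z → ℝ) :
    ℕ → Fin n → Fin z → ℝ
  | 0 => F0
  | t + 1 => fun i k => ∑ j, weight ε (opinions ε F0 t) i j * opinions ε F0 t j k


theorem consensus_reached {n z : ℕ} (hn : 1 ≤ n) (hz : 2 ≤ z)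
    {ε : ℝ} (hε : 0 < ε) (F0 : Fin n → Fin z → ℝ) (hF0 : ∀ i, ProbVec (F0 i)) :
    ∃ fstar : Fin z → ℝ, ProbVec fstar ∧
      (∀ i, Filter.Tendsto (fun t => opinions ε F0 t i) Filter.atTop (nhds fstar)) ∧
      (∀ i j, Filter.Tendsto (fun t => opinions ε F0 t i - opinions ε F0 t j)
        Filter.atTop (nhds 0)) := by
  haveI : Nonempty (Fin n) := ⟨⟨0, hn⟩⟩
  haveI : Nonempty (Fin z) := ⟨⟨0, by omega⟩⟩
  have hne : (Finset.univ : Finset (Fin n)).Nonempty := univ_nonempty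
  -- basic positivity facts
  have hD0 : ∀ f g : Fin z → ℝ, 0 ≤ D f g := fun f g => Real.sqrt_nonneg _
  have hεD : ∀ f g : Fin z → ℝ, 0 < ε + D f g :=
    fun f g => add_pos_of_pos_of_nonneg hε (hD0 f g)
  have hden : ∀ (G : Fin n → Fin z → ℝ) (i : Fin n),
      0 < ∑ m, (ε + D (G i) (G m))⁻¹ := by
    intro G i
    exact Finset.sum_pos (fun m _ => inv_pos.2 (hεD _ _)) hne
  have hwpos : ∀ (G : Fin n → Fin z → ℝ) (i j : Fin n), 0 < weight ε G i j := by
    intro G i j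
    exact div_pos (inv_pos.2 (hεD _ _)) (hden G i)
  have hwsum : ∀ (G : Fin n → Fin z → ℝ) (i : Fin n), ∑ j, weight ε G i j = 1 := by
    intro G i
    unfold weight
    rw [← Finset.sum_div]
    exact div_self (hden G i).ne'
  -- opinions remain probability vectors
  have hPV : ∀ t i, ProbVec (opinions ε F0 t i) := by
    intro t
    induction t with
    | zero => exact hF0
    | succ t ih =>
      intro i
      constructor
      · intro k
        show 0 ≤ ∑ j, weight ε (opinions ε F0 t) i j * opinions ε F0 t j k
        exact Finset.sum_nonneg fun j _ =>
          mul_nonneg (hwpos _ i j).le ((ih j).1 k)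
      · show ∑ k, ∑ j, weight ε (opinions ε F0 t) i j * opinions ε F0 t j k = 1
        rw [Finset.sum_comm]
        have : ∀ j : Fin n, ∑ k, weight ε (opinions ε F0 t) i j * opinions ε F0 t j k
            = weight ε (opinions ε F0 t) i j := by
          intro j
          rw [← Finset.mul_sum, (ih j).2, mul_one]
        rw [Finset.sum_congr rfl fun j _ => this j]
        exact hwsum _ i
  -- entries are bounded by 1, so D ≤ 1
  have hentry : ∀ {f : Fin z → ℝ}, ProbVec f → ∀ k, f k ≤ 1 := by
    intro f hf k
    calc f k ≤ ∑ m, f m := Finset.single_le_sum (fun m _ => hf.1 m) (mem_univ k)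
    _ = 1 := hf.2
  have hDle : ∀ {f g : Fin z → ℝ}, ProbVec f → ProbVec g → D f g ≤ 1 := by
    intro f g hf hg
    have h1 : ∑ k, (f k - g k) ^ 2 ≤ ∑ k, (f k + g k) := by
      apply Finset.sum_le_sum
      intro k _
      have h1 : |f k - g k| ≤ 1 := by
        rw [abs_le]
        constructor <;> nlinarith [hf.1 k, hg.1 k, hentry hf k, hentry hg k]
      have h2 : |f k - g k| ≤ f k + g k := by
        rw [abs_le]; constructor <;> nlinarith [hf.1 k, hg.1 k]
      calc (f k - g k) ^ 2 = |f k - g k| * |f k - g k| := by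
            rw [abs_mul_abs_self]; ring
      _ ≤ 1 * (f k + g k) := by
            apply mul_le_mul h1 h2 (abs_nonneg _) zero_le_one
      _ = f k + g k := one_mul _
    have h2 : ∑ k, (f k + g k) = 2 := by
      rw [Finset.sum_add_distrib, hf.2, hg.2]; norm_num
    have hzpos : (0:ℝ) < z := by positivity
    have h3 : (∑ k, (f k - g k) ^ 2) / z ≤ 1 := by
      rw [div_le_one hzpos]
      have : (2:ℝ) ≤ z := by exact_mod_cast hz
      linarith
    calc D f g ≤ Real.sqrt 1 := Real.sqrt_le_sqrt h3
    _ = 1 := Real.sqrt_one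
  -- uniform lower bound on weights
  set δ : ℝ := (ε + 1)⁻¹ / (n * ε⁻¹) with hδdef
  have hδpos : 0 < δ := by
    apply div_pos (inv_pos.2 (by linarith)) (mul_pos (by exact_mod_cast hn) (inv_pos.2 hε))
  have hδw : ∀ t i j, δ ≤ weight ε (opinions ε F0 t) i j := by
    intro t i j
    apply div_le_div₀ (inv_pos.2 (hεD _ _)).le
    · apply inv_anti₀ (hεD _ _)
      have := hDle (hPV t i) (hPV t j)
      linarith
    · exact hden _ i
    · calc ∑ m, (ε + D (opinions ε F0 t i) (opinions ε F0 t m))⁻¹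
          ≤ ∑ _m : Fin n, ε⁻¹ := by
            apply Finset.sum_le_sum
            intro m _
            apply inv_anti₀ hε
            linarith [hD0 (opinions ε F0 t i) (opinions ε F0 t m)]
      _ = n * ε⁻¹ := by rw [Finset.sum_const, card_univ, Fintype.card_fin]; ring
  have hδ1 : δ ≤ 1 := by
    have h1 := hδw 0 (Classical.arbitrary _) (Classical.arbitrary _)
    have h2 : weight ε (opinions ε F0 0) (Classical.arbitrary _) (Classical.arbitrary _)
        ≤ 1 := by
      rw [← hwsum (opinions ε F0 0) (Classical.arbitrary _)]
      exact Finset.single_le_sum (fun j _ => (hwpos _ _ j).le) (mem_univ _)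
    linarith
  -- max and min over experts of each coordinate
  set Mx : ℕ → Fin z → ℝ := fun t k => univ.sup' hne (fun i => opinions ε F0 t i k) with hMx
  set In : ℕ → Fin z → ℝ := fun t k => univ.inf' hne (fun i => opinions ε F0 t i k) with hIn
  have hleM : ∀ t k i, opinions ε F0 t i k ≤ Mx t k := fun t k i =>
    le_sup' (fun i => opinions ε F0 t i k) (mem_univ i)
  have hleI : ∀ t k i, In t k ≤ opinions ε F0 t i k := fun t k i =>
    inf'_le (fun i => opinions ε F0 t i k) (mem_univ i)
  have hIM : ∀ t k, In t k ≤ Mx t k := fun t k =>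
    le_trans (hleI t k (Classical.arbitrary _)) (hleM t k (Classical.arbitrary _))
  -- one-step contraction
  have hstepM : ∀ t k, Mx (t+1) k ≤ Mx t k - (δ/2) * (Mx t k - In t k) := by
    intro t k
    apply sup'_le
    intro i _
    obtain ⟨j0, -, hj0⟩ := Finset.exists_mem_eq_inf' hne (fun j => opinions ε F0 t j k)
    have hsplit : ∑ j, weight ε (opinions ε F0 t) i j * opinions ε F0 t j k
        = weight ε (opinions ε F0 t) i j0 * opinions ε F0 t j0 k
          + ∑ j ∈ univ.erase j0, weight ε (opinions ε F0 t) i j * opinions ε F0 t j k :=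
      (Finset.add_sum_erase univ _ (mem_univ j0)).symm
    have hsum1 : weight ε (opinions ε F0 t) i j0
        + ∑ j ∈ univ.erase j0, weight ε (opinions ε F0 t) i j = 1 := by
      rw [Finset.add_sum_erase univ _ (mem_univ j0)]
      exact hwsum _ i
    have hrest : ∑ j ∈ univ.erase j0, weight ε (opinions ε F0 t) i j * opinions ε F0 t j k
        ≤ (∑ j ∈ univ.erase j0, weight ε (opinions ε F0 t) i j) * Mx t k := by
      rw [Finset.sum_mul]
      exact Finset.sum_le_sum fun j _ =>
        mul_le_mul_of_nonneg_left (hleM t k j) (hwpos _ i j).le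
    have hj0In : opinions ε F0 t j0 k = In t k := hj0.symm
    have hw := hδw t i j0
    have hd := hIM t k
    have hsum1' : ∑ j ∈ univ.erase j0, weight ε (opinions ε F0 t) i j
        = 1 - weight ε (opinions ε F0 t) i j0 := by linarith
    rw [hsum1'] at hrest
    show ∑ j, weight ε (opinions ε F0 t) i j * opinions ε F0 t j k ≤ _
    rw [hsplit, hj0In]
    nlinarith [mul_nonneg (sub_nonneg.2 hw) (sub_nonneg.2 hd),
      mul_nonneg hδpos.le (sub_nonneg.2 hd)]
  have hstepI : ∀ t k, In t k + (δ/2) * (Mx t k - In t k) ≤ In (t+1) k := by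
    intro t k
    apply le_inf'
    intro i _
    obtain ⟨j0, -, hj0⟩ := Finset.exists_mem_eq_sup' hne (fun j => opinions ε F0 t j k)
    have hsplit : ∑ j, weight ε (opinions ε F0 t) i j * opinions ε F0 t j k
        = weight ε (opinions ε F0 t) i j0 * opinions ε F0 t j0 k
          + ∑ j ∈ univ.erase j0, weight ε (opinions ε F0 t) i j * opinions ε F0 t j k :=
      (Finset.add_sum_erase univ _ (mem_univ j0)).symm
    have hsum1 : weight ε (opinions ε F0 t) i j0
        + ∑ j ∈ univ.erase j0, weight ε (opinions ε F0 t) i j = 1 := by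
      rw [Finset.add_sum_erase univ _ (mem_univ j0)]
      exact hwsum _ i
    have hrest : (∑ j ∈ univ.erase j0, weight ε (opinions ε F0 t) i j) * In t k
        ≤ ∑ j ∈ univ.erase j0, weight ε (opinions ε F0 t) i j * opinions ε F0 t j k := by
      rw [Finset.sum_mul]
      exact Finset.sum_le_sum fun j _ =>
        mul_le_mul_of_nonneg_left (hleI t k j) (hwpos _ i j).le
    have hj0Mx : opinions ε F0 t j0 k = Mx t k := hj0.symm
    have hw := hδw t i j0
    have hd := hIM t k
    have hsum1' : ∑ j ∈ univ.erase j0, weight ε (opinions ε F0 t) i j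
        = 1 - weight ε (opinions ε F0 t) i j0 := by linarith
    rw [hsum1'] at hrest
    show _ ≤ ∑ j, weight ε (opinions ε F0 t) i j * opinions ε F0 t j k
    rw [hsplit, hj0Mx]
    nlinarith [mul_nonneg (sub_nonneg.2 hw) (sub_nonneg.2 hd),
      mul_nonneg hδpos.le (sub_nonneg.2 hd)]
  -- the gap contracts geometrically
  have hc0 : (0:ℝ) ≤ 1 - δ := by linarith
  have hc1 : 1 - δ < 1 := by linarith
  have hgap : ∀ t k, Mx t k - In t k ≤ (1 - δ) ^ t * (Mx 0 k - In 0 k) := by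
    intro t
    induction t with
    | zero => intro k; simp
    | succ t ih =>
      intro k
      have h1 : Mx (t+1) k - In (t+1) k ≤ (1 - δ) * (Mx t k - In t k) := by
        have hM := hstepM t k
        have hI := hstepI t k
        nlinarith [hM, hI]
      calc Mx (t+1) k - In (t+1) k ≤ (1 - δ) * (Mx t k - In t k) := h1
      _ ≤ (1 - δ) * ((1 - δ) ^ t * (Mx 0 k - In 0 k)) :=
          mul_le_mul_of_nonneg_left (ih k) hc0
      _ = (1 - δ) ^ (t+1) * (Mx 0 k - In 0 k) := by ring
  -- the gap tends to zero
  have hgap0 : ∀ k, Filter.Tendsto (fun t => Mx t k - In t k) Filter.atTop (nhds 0) := by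
    intro k
    have hg : Filter.Tendsto (fun t => (1 - δ) ^ t * (Mx 0 k - In 0 k))
        Filter.atTop (nhds 0) := by
      have := (tendsto_pow_atTop_nhds_zero_of_lt_one hc0 hc1).mul_const (Mx 0 k - In 0 k)
      simpa using this
    refine tendsto_of_tendsto_of_tendsto_of_le_of_le (g := fun _ => (0:ℝ))
      tendsto_const_nhds hg (fun t => sub_nonneg.2 (hIM t k)) (fun t => hgap t k)
  -- Mx is antitone and bounded below, hence converges
  have hManti : ∀ k, Antitone (fun t => Mx t k) := by
    intro k
    apply antitone_nat_of_succ_le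
    intro t
    have := hstepM t k
    have h1 := hIM t k
    nlinarith
  have hImono : ∀ k, Monotone (fun t => In t k) := by
    intro k
    apply monotone_nat_of_le_succ
    intro t
    have := hstepI t k
    have h1 := hIM t k
    nlinarith
  have hMbdd : ∀ k, BddBelow (Set.range fun t => Mx t k) := by
    intro k
    refine ⟨In 0 k, ?_⟩
    rintro x ⟨t, rfl⟩
    exact le_trans (hImono k (Nat.zero_le t)) (hIM t k)
  set L : Fin z → ℝ := fun k => ⨅ t, Mx t k with hL
  have hML : ∀ k, Filter.Tendsto (fun t => Mx t k) Filter.atTop (nhds (L k)) := by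
    intro k
    exact tendsto_atTop_ciInf (hManti k) (hMbdd k)
  -- each coordinate of each expert converges to L k
  have htendk : ∀ i k, Filter.Tendsto (fun t => opinions ε F0 t i k)
      Filter.atTop (nhds (L k)) := by
    intro i k
    have hsub : Filter.Tendsto (fun t => Mx t k - opinions ε F0 t i k)
        Filter.atTop (nhds 0) := by
      refine tendsto_of_tendsto_of_tendsto_of_le_of_le (g := fun _ => (0:ℝ))
        tendsto_const_nhds (hgap0 k) (fun t => sub_nonneg.2 (hleM t k i))
        (fun t => by have := hleI t k i; linarith)
    have := (hML k).sub hsub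
    simpa using this
  have htend : ∀ i, Filter.Tendsto (fun t => opinions ε F0 t i) Filter.atTop (nhds L) := by
    intro i
    rw [tendsto_pi_nhds]
    exact fun k => htendk i k
  refine ⟨L, ⟨?_, ?_⟩, htend, ?_⟩
  · intro k
    exact ge_of_tendsto' (htendk (Classical.arbitrary _) k)
      (fun t => (hPV t (Classical.arbitrary _)).1 k)
  · have h1 : Filter.Tendsto (fun t => ∑ k, opinions ε F0 t (Classical.arbitrary _) k)
        Filter.atTop (nhds (∑ k, L k)) :=
      tendsto_finset_sum _ (fun k _ => htendk (Classical.arbitrary _) k)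
    have h2 : (fun t => ∑ k, opinions ε F0 t (Classical.arbitrary (Fin n)) k)
        = fun _ => (1:ℝ) := funext fun t => (hPV t _).2
    rw [h2] at h1
    exact tendsto_nhds_unique h1 tendsto_const_nhds
  · intro i j
    have := (htend i).sub (htend j)
    simpa using this
end

section
/- Fix n ≥ 1 experts, z ≥ 2 outcomes, and ε > 0. Let f_1⁽⁰⁾, …, f_n⁽⁰⁾ ∈ ℝ^z be probability vectors, and for t ≥ 1 define p_{i,j}⁽ᵗ⁾ = (ε + D(f_i⁽ᵗ⁻¹⁾, f_j⁽ᵗ⁻¹⁾))⁻¹ / Σ_{k=1}^{n} (ε + D(f_i⁽ᵗ⁻¹⁾, f_k⁽ᵗ⁻¹⁾))⁻¹ and f_i⁽ᵗ⁾ = Σ_{j=1}^{n} p_{i,j}⁽ᵗ⁾ · f_j⁽ᵗ⁻¹⁾, where D(f, g) = sqrt( (Σ_{k=1}^{z} (f_k − g_k)²) / z ). Then for all experts i and j, the weight p_{i,j}⁽ᵗ⁾ converges to 1/n as t → ∞. -/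
open Finset

lemma D_nonneg {z : ℕ} (f g : Fin z → ℝ) : 0 ≤ D f g := Real.sqrt_nonneg _

lemma probvec_entry_le_one {z : ℕ} {f : Fin z → ℝ} (hf : ProbVec f) (k : Fin z) : f k ≤ 1 := by
  rw [← hf.2]
  exact Finset.single_le_sum (fun i _ => hf.1 i) (mem_univ k)

lemma D_le_one {z : ℕ} (hz : 2 ≤ z) {f g : Fin z → ℝ} (hf : ProbVec f) (hg : ProbVec g) :
    D f g ≤ 1 := by
  have h1 : ∑ k, (f k - g k) ^ 2 ≤ 2 := by
    calc ∑ k, (f k - g k) ^ 2 ≤ ∑ k, |f k - g k| := by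
          apply Finset.sum_le_sum
          intro k _
          have h1 : |f k - g k| ≤ 1 := by
            rw [abs_sub_le_iff]
            constructor
            · linarith [probvec_entry_le_one hf k, hg.1 k]
            · linarith [probvec_entry_le_one hg k, hf.1 k]
          calc (f k - g k) ^ 2 = |f k - g k| * |f k - g k| := by
                rw [← sq_abs, sq]
            _ ≤ 1 * |f k - g k| := by
                apply mul_le_mul_of_nonneg_right h1 (abs_nonneg _)
            _ = |f k - g k| := one_mul _
      _ ≤ ∑ k, (f k + g k) := by
          apply Finset.sum_le_sum
          intro k _
          rw [abs_sub_le_iff]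
          constructor
          · linarith [hg.1 k, hf.1 k]
          · linarith [hg.1 k, hf.1 k]
      _ = 2 := by rw [Finset.sum_add_distrib, hf.2, hg.2]; norm_num
  have hz' : (2 : ℝ) ≤ (z : ℝ) := by exact_mod_cast hz
  have : (∑ k, (f k - g k) ^ 2) / z ≤ 1 := by
    rw [div_le_one (by linarith)]
    linarith
  calc D f g ≤ Real.sqrt 1 := Real.sqrt_le_sqrt this
    _ = 1 := Real.sqrt_one

lemma denom_pos {n z : ℕ} (hn : 1 ≤ n) {ε : ℝ} (hε : 0 < ε) (F : Fin n → Fin z → ℝ)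
    (i : Fin n) : 0 < ∑ m, (ε + D (F i) (F m))⁻¹ := by
  have : (univ : Finset (Fin n)).Nonempty := univ_nonempty_iff.2 (Fin.pos_iff_nonempty.1 hn)
  apply Finset.sum_pos _ this
  intro m _
  exact inv_pos.2 (by linarith [D_nonneg (F i) (F m)])

lemma weight_nonneg {n z : ℕ} (hn : 1 ≤ n) {ε : ℝ} (hε : 0 < ε) (F : Fin n → Fin z → ℝ)
    (i j : Fin n) : 0 ≤ weight ε F i j := by
  apply div_nonneg
  · exact inv_nonneg.2 (by linarith [D_nonneg (F i) (F j)])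
  · exact le_of_lt (denom_pos hn hε F i)

lemma weight_sum {n z : ℕ} (hn : 1 ≤ n) {ε : ℝ} (hε : 0 < ε) (F : Fin n → Fin z → ℝ)
    (i : Fin n) : ∑ j, weight ε F i j = 1 := by
  unfold weight
  rw [← Finset.sum_div]
  exact div_self (ne_of_gt (denom_pos hn hε F i))

lemma opinions_probvec {n z : ℕ} (hn : 1 ≤ n) {ε : ℝ} (hε : 0 < ε)
    (F0 : Fin n → Fin z → ℝ) (hF0 : ∀ i, ProbVec (F0 i)) :
    ∀ t i, ProbVec (opinions ε F0 t i) := by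
  intro t
  induction t with
  | zero => exact hF0
  | succ t ih =>
    intro i
    constructor
    · intro k
      apply Finset.sum_nonneg
      intro j _
      exact mul_nonneg (weight_nonneg hn hε _ i j) ((ih j).1 k)
    · show ∑ k, ∑ j, weight ε (opinions ε F0 t) i j * opinions ε F0 t j k = 1
      rw [Finset.sum_comm]
      calc ∑ j, ∑ k, weight ε (opinions ε F0 t) i j * opinions ε F0 t j k
          = ∑ j, weight ε (opinions ε F0 t) i j * ∑ k, opinions ε F0 t j k := by
            simp [Finset.mul_sum]
        _ = ∑ j, weight ε (opinions ε F0 t) i j := by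
            apply Finset.sum_congr rfl; intro j _; rw [(ih j).2, mul_one]
        _ = 1 := weight_sum hn hε _ i

lemma weight_ge {n z : ℕ} (hn : 1 ≤ n) (hz : 2 ≤ z) {ε : ℝ} (hε : 0 < ε)
    (F : Fin n → Fin z → ℝ) (hF : ∀ i, ProbVec (F i)) (i j : Fin n) :
    ε / (n * (ε + 1)) ≤ weight ε F i j := by
  have hnum : (ε + 1)⁻¹ ≤ (ε + D (F i) (F j))⁻¹ := by
    apply inv_anti₀ (by linarith [D_nonneg (F i) (F j)])
    linarith [D_le_one hz (hF i) (hF j)]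
  have hden : ∑ m, (ε + D (F i) (F m))⁻¹ ≤ (n : ℝ) * ε⁻¹ := by
    calc ∑ m, (ε + D (F i) (F m))⁻¹ ≤ ∑ _m : Fin n, ε⁻¹ := by
          apply Finset.sum_le_sum
          intro m _
          exact inv_anti₀ hε (by linarith [D_nonneg (F i) (F m)])
      _ = (n : ℝ) * ε⁻¹ := by simp [mul_comm]
  have hden_pos := denom_pos hn hε F i
  have hn' : (0 : ℝ) < n := by exact_mod_cast hn
  have h1 : ε / (n * (ε + 1)) = (ε + 1)⁻¹ / ((n : ℝ) * ε⁻¹) := by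
    rw [div_eq_div_iff (by positivity) (by positivity)]
    field_simp
  rw [h1]
  unfold weight
  exact div_le_div₀ (le_trans (by positivity) hnum) hnum hden_pos hden

lemma convex_comb_le {n : ℕ} (hne : (univ : Finset (Fin n)).Nonempty) {δ : ℝ} (hδ : 0 ≤ δ)
    (p x : Fin n → ℝ) (hp : ∀ j, δ ≤ p j) (hp1 : ∑ j, p j = 1) :
    ∑ j, p j * x j ≤ univ.sup' hne x - δ * (univ.sup' hne x - univ.inf' hne x) := by
  set M := univ.sup' hne x
  set m := univ.inf' hne x
  obtain ⟨j0, _, hj0⟩ := Finset.exists_mem_eq_inf' hne x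
  have hsum : ∑ j, p j * (M - x j) ≥ δ * (M - m) := by
    have h1 : p j0 * (M - x j0) ≤ ∑ j, p j * (M - x j) := by
      apply Finset.single_le_sum _ (mem_univ j0)
      intro j _
      exact mul_nonneg (le_trans hδ (hp j)) (by linarith [Finset.le_sup' x (mem_univ j)])
    have h2 : δ * (M - m) ≤ p j0 * (M - x j0) := by
      rw [← hj0]
      apply mul_le_mul (hp j0) le_rfl _ (le_trans hδ (hp j0))
      have := Finset.inf'_le x (mem_univ j0)
      linarith [Finset.le_sup' x (mem_univ j0)]
    linarith
  have hexp : ∑ j, p j * (M - x j) = M - ∑ j, p j * x j := by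
    calc ∑ j, p j * (M - x j) = ∑ j, (p j * M - p j * x j) := by
          apply Finset.sum_congr rfl; intro j _; ring
      _ = (∑ j, p j) * M - ∑ j, p j * x j := by rw [Finset.sum_sub_distrib, Finset.sum_mul]
      _ = M - ∑ j, p j * x j := by rw [hp1, one_mul]
  rw [hexp] at hsum
  linarith

lemma convex_comb_ge {n : ℕ} (hne : (univ : Finset (Fin n)).Nonempty)
    (p x : Fin n → ℝ) (hp : ∀ j, 0 ≤ p j) (hp1 : ∑ j, p j = 1) :
    univ.inf' hne x ≤ ∑ j, p j * x j := by
  set m := univ.inf' hne x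
  calc m = ∑ j, p j * m := by rw [← Finset.sum_mul, hp1, one_mul]
    _ ≤ ∑ j, p j * x j := by
        apply Finset.sum_le_sum
        intro j _
        exact mul_le_mul_of_nonneg_left (Finset.inf'_le x (mem_univ j)) (hp j)

theorem weights_tendsto_inv_n {n z : ℕ} (hn : 1 ≤ n) (hz : 2 ≤ z)
    {ε : ℝ} (hε : 0 < ε) (F0 : Fin n → Fin z → ℝ) (hF0 : ∀ i, ProbVec (F0 i)) :
    ∀ i j : Fin n,
      Filter.Tendsto (fun t => weight ε (opinions ε F0 (t - 1)) i j)
        Filter.atTop (nhds (1 / n)) := by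
  intro i j
  have hne : (univ : Finset (Fin n)).Nonempty := univ_nonempty_iff.2 (Fin.pos_iff_nonempty.1 hn)
  set F := opinions ε F0 with hF
  have hprob : ∀ t i, ProbVec (F t i) := opinions_probvec hn hε F0 hF0
  have hn' : (0 : ℝ) < n := by exact_mod_cast hn
  set δ : ℝ := ε / (n * (ε + 1)) with hδdef
  have hδpos : 0 < δ := by positivity
  have hδlt : δ < 1 := by
    rw [hδdef, div_lt_one (by positivity)]
    have : (1 : ℝ) ≤ n := by exact_mod_cast hn
    nlinarith
  have hr0 : (0 : ℝ) ≤ 1 - δ := by linarith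
  have hr1 : (1 : ℝ) - δ < 1 := by linarith
  -- per-coordinate diameter bound
  have key : ∀ t (a b : Fin n) (k : Fin z), |F t a k - F t b k| ≤ (1 - δ) ^ t := by
    intro t
    induction t with
    | zero =>
      intro a b k
      simp only [pow_zero]
      rw [abs_sub_le_iff]
      constructor
      · linarith [probvec_entry_le_one (hprob 0 a) k, (hprob 0 b).1 k]
      · linarith [probvec_entry_le_one (hprob 0 b) k, (hprob 0 a).1 k]
    | succ t ih =>
      intro a b k
      set x : Fin n → ℝ := fun c => F t c k with hx
      set M := univ.sup' hne x
      set m := univ.inf' hne x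
      have hdiam : M - m ≤ (1 - δ) ^ t := by
        obtain ⟨a0, _, ha0⟩ := Finset.exists_mem_eq_sup' hne x
        obtain ⟨b0, _, hb0⟩ := Finset.exists_mem_eq_inf' hne x
        have hM : M = x a0 := ha0
        have hm : m = x b0 := hb0
        calc M - m = x a0 - x b0 := by rw [hM, hm]
          _ ≤ |F t a0 k - F t b0 k| := le_abs_self _
          _ ≤ (1 - δ) ^ t := ih a0 b0 k
      have hub : ∀ c : Fin n, F (t + 1) c k ≤ M - δ * (M - m) := by
        intro c
        have : F (t + 1) c k = ∑ j, weight ε (F t) c j * x j := by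
          rw [hF]; rfl
        rw [this]
        exact convex_comb_le hne (le_of_lt hδpos) _ x
          (fun j => weight_ge hn hz hε (F t) (hprob t) c j)
          (weight_sum hn hε (F t) c)
      have hlb : ∀ c : Fin n, m ≤ F (t + 1) c k := by
        intro c
        have : F (t + 1) c k = ∑ j, weight ε (F t) c j * x j := by
          rw [hF]; rfl
        rw [this]
        exact convex_comb_ge hne _ x (fun j => weight_nonneg hn hε (F t) c j)
          (weight_sum hn hε (F t) c)
      have h1 : F (t + 1) a k - F (t + 1) b k ≤ (1 - δ) * (M - m) := by
        have := hub a; have := hlb b; nlinarith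
      have h2 : F (t + 1) b k - F (t + 1) a k ≤ (1 - δ) * (M - m) := by
        have := hub b; have := hlb a; nlinarith
      rw [abs_sub_le_iff]
      constructor
      · calc F (t+1) a k - F (t+1) b k ≤ (1 - δ) * (M - m) := h1
          _ ≤ (1 - δ) * (1 - δ) ^ t := by nlinarith
          _ = (1 - δ) ^ (t + 1) := by ring
      · calc F (t+1) b k - F (t+1) a k ≤ (1 - δ) * (M - m) := h2
          _ ≤ (1 - δ) * (1 - δ) ^ t := by nlinarith
          _ = (1 - δ) ^ (t + 1) := by ring
  -- D bound
  have hDb : ∀ t (a b : Fin n), D (F t a) (F t b) ≤ (1 - δ) ^ t := by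
    intro t a b
    have hzpos : (0 : ℝ) < z := by exact_mod_cast lt_of_lt_of_le two_pos hz
    have hS : (∑ k, (F t a k - F t b k) ^ 2) / z ≤ ((1 - δ) ^ t) ^ 2 := by
      rw [div_le_iff₀ hzpos]
      calc ∑ k, (F t a k - F t b k) ^ 2 ≤ ∑ _k : Fin z, ((1 - δ) ^ t) ^ 2 := by
            apply Finset.sum_le_sum
            intro k _
            rw [← sq_abs]
            exact pow_le_pow_left₀ (abs_nonneg _) (key t a b k) 2
        _ = ((1 - δ) ^ t) ^ 2 * z := by simp [mul_comm]
    calc D (F t a) (F t b) ≤ Real.sqrt (((1 - δ) ^ t) ^ 2) := Real.sqrt_le_sqrt hS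
      _ = (1 - δ) ^ t := Real.sqrt_sq (by positivity)
  have hDtend : ∀ a b : Fin n,
      Filter.Tendsto (fun t => D (F t a) (F t b)) Filter.atTop (nhds 0) := by
    intro a b
    apply squeeze_zero (fun t => D_nonneg _ _) (fun t => hDb t a b)
    exact tendsto_pow_atTop_nhds_zero_of_lt_one hr0 hr1
  -- weight tendsto
  have hw : Filter.Tendsto (fun t => weight ε (F t) i j) Filter.atTop (nhds (1 / n)) := by
    have hnum : Filter.Tendsto (fun t => (ε + D (F t i) (F t j))⁻¹) Filter.atTop
        (nhds ε⁻¹) := by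
      have h1 : Filter.Tendsto (fun t => ε + D (F t i) (F t j)) Filter.atTop (nhds (ε + 0)) :=
        tendsto_const_nhds.add (hDtend i j)
      rw [add_zero] at h1
      exact h1.inv₀ (ne_of_gt hε)
    have hden : Filter.Tendsto (fun t => ∑ m, (ε + D (F t i) (F t m))⁻¹) Filter.atTop
        (nhds ((n : ℝ) * ε⁻¹)) := by
      have h1 : Filter.Tendsto (fun t => ∑ m, (ε + D (F t i) (F t m))⁻¹) Filter.atTop
          (nhds (∑ _m : Fin n, ε⁻¹)) := by
        apply tendsto_finset_sum
        intro m _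
        have h2 : Filter.Tendsto (fun t => ε + D (F t i) (F t m)) Filter.atTop (nhds (ε + 0)) :=
          tendsto_const_nhds.add (hDtend i m)
        rw [add_zero] at h2
        exact h2.inv₀ (ne_of_gt hε)
      simpa [mul_comm] using h1
    have hlim : Filter.Tendsto (fun t => weight ε (F t) i j) Filter.atTop
        (nhds (ε⁻¹ / ((n : ℝ) * ε⁻¹))) := hnum.div hden (by positivity)
    have : ε⁻¹ / ((n : ℝ) * ε⁻¹) = 1 / n := by
      field_simp
    rwa [this] at hlim
  exact hw.comp (Filter.tendsto_sub_atTop_nat 1)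
end
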